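/- Let k > 0, a₁ > 0 and ψ ∈ C²(ℝ) with ψ(s) ≥ ν > 0 for all s ∈ ℝ, and set a₀(s) = a₁|s|^k + ψ(s). Let g₀ be the solution of g₀'(s) = 1/√(a₀(g₀(s))), g₀(0) = 0, and define G₀(s) = s − (2/(k+2)) g₀(s) √(a₀(g₀(s))) for s ≥ 0. Assume ψ(s)/s^k → 0 as s → +∞, kψ(s) − sψ'(s) ≥ 0 for all s ≥ 0, and, in the case 0 < k ≤ 2, that kψ(s) − sψ'(s) → α as s → +∞ for some α > 0. Then: G₀ is nondecreasing on [0,∞), G₀(s) ≥ 0 for every s ≥ 0, G₀(s) > 0 for all sufficiently large s, and lim_{s→+∞} s(g₀'(s))²/G₀(s) equals 0 if k ≥ 2 and equals (2−k)/α if 0 < k < 2. -/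

import Mathlib

open Filter Real Topology Set

lemma lhopital_atTop_inf (f g f' g' : ℝ → ℝ) (l : ℝ)
    (hf : ∀ᶠ x in atTop, HasDerivAt f (f' x) x)
    (hg : ∀ᶠ x in atTop, HasDerivAt g (g' x) x)
    (hgp : ∀ᶠ x in atTop, 0 < g' x)
    (hgtop : Tendsto g atTop atTop)
    (hratio : Tendsto (fun x => f' x / g' x) atTop (𝓝 l)) :
    Tendsto (fun x => f x / g x) atTop (𝓝 l) := by
  rw [Metric.tendsto_nhds]
  intro ε hε
  have hε3 : 0 < ε / 3 := by linarith
  obtain ⟨a, ha⟩ :=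
    (((hf.and hg).and (hgp.and (hratio.eventually (Metric.ball_mem_nhds l hε3)))).and
      (eventually_ge_atTop 0)).exists_forall_of_atTop
  -- g strictly monotone on [a, ∞)
  have hgmono : StrictMonoOn g (Ici a) := by
    apply strictMonoOn_of_deriv_pos (convex_Ici a)
    · intro x hx
      exact (ha x hx).1.1.2.differentiableAt.continuousAt.continuousWithinAt
    · intro x hx
      rw [interior_Ici] at hx
      rw [(ha x hx.le).1.1.2.deriv]
      exact (ha x hx.le).1.2.1
  have key : ∀ x > a, |(f x - f a) / (g x - g a) - l| ≤ ε / 3 := by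
    intro x hx
    obtain ⟨c, hc, hceq⟩ := exists_ratio_hasDerivAt_eq_ratio_slope f f' hx
      (fun y (hy : y ∈ Icc a x) => (ha y hy.1).1.1.1.continuousAt.continuousWithinAt)
      (fun y (hy : y ∈ Ioo a x) => (ha y hy.1.le).1.1.1) g g'
      (fun y (hy : y ∈ Icc a x) => (ha y hy.1).1.1.2.continuousAt.continuousWithinAt)
      (fun y (hy : y ∈ Ioo a x) => (ha y hy.1.le).1.1.2)
    have hD : 0 < g x - g a := sub_pos.2 (hgmono self_mem_Ici hx.le hx)
    have hgc : 0 < g' c := (ha c hc.1.le).1.2.1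
    have hQ : (f x - f a) / (g x - g a) = f' c / g' c := by
      rw [div_eq_div_iff hD.ne' hgc.ne']
      linear_combination -hceq
    rw [hQ]
    have := (ha c hc.1.le).1.2.2
    rw [Real.dist_eq] at this
    exact this.le
  -- eventual bounds on g x
  have h1 := hgtop.eventually_ge_atTop (max (2 * |g a|) (max 1 (3 * |f a - l * g a| / ε + 1)))
  filter_upwards [h1, eventually_gt_atTop a] with x hgx hxa
  have hgx1 : (1 : ℝ) ≤ g x := le_trans (le_trans (le_max_left _ _) (le_max_right _ _)) hgx
  have hgxpos : 0 < g x := by linarith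
  have hgx2 : 2 * |g a| ≤ g x := le_trans (le_max_left _ _) hgx
  have hgx3 : 3 * |f a - l * g a| / ε + 1 ≤ g x :=
    le_trans (le_trans (le_max_right _ _) (le_max_right _ _)) hgx
  have hD : 0 < g x - g a := by
    have : g a ≤ |g a| := le_abs_self _
    nlinarith [abs_nonneg (g a)]
  rw [Real.dist_eq]
  have key' := key x hxa
  have hident : f x / g x - l = (((f x - f a) / (g x - g a) - l) * (g x - g a)
      + (f a - l * g a)) / g x := by
    field_simp
    ring
  rw [hident]
  rw [abs_div, abs_of_pos hgxpos]
  have hb1 : |((f x - f a) / (g x - g a) - l) * (g x - g a) + (f a - l * g a)|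
      ≤ (ε / 3) * (g x - g a) + |f a - l * g a| := by
    calc |((f x - f a) / (g x - g a) - l) * (g x - g a) + (f a - l * g a)|
        ≤ |((f x - f a) / (g x - g a) - l) * (g x - g a)| + |f a - l * g a| := abs_add_le _ _
      _ ≤ (ε / 3) * (g x - g a) + |f a - l * g a| := by
          rw [abs_mul, abs_of_pos hD]
          exact add_le_add_left (mul_le_mul_of_nonneg_right key' hD.le) _
  have hDle : g x - g a ≤ (3 / 2) * g x := by
    have : -(g a) ≤ |g a| := neg_le_abs _
    nlinarith
  have h2 : |f a - l * g a| ≤ (ε / 3) * g x := by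
    have : 3 * |f a - l * g a| / ε ≤ g x - 1 := by linarith
    have := (div_le_iff₀ hε).1 this
    nlinarith [abs_nonneg (f a - l * g a)]
  calc |((f x - f a) / (g x - g a) - l) * (g x - g a) + (f a - l * g a)| / g x
      ≤ ((ε / 3) * ((3 / 2) * g x) + (ε / 3) * g x) / g x := by
        gcongr
        calc _ ≤ (ε / 3) * (g x - g a) + |f a - l * g a| := hb1
          _ ≤ _ := by nlinarith
    _ = (5 * ε / 6) := by field_simp; ring
    _ < ε := by linarith

lemma aux_ratio (φ A S P r K : ℝ) (hA : S * S = A) (hS : S ≠ 0) (hP : P ≠ 0)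
    (hr : r ≠ 0) (hK : K ≠ 0) :
    φ * (P / S) / (K * r) = φ / (K * A) / (r * P⁻¹ * (1 / S)) := by
  subst hA
  field_simp

theorem G0_monotone_and_limit
    (k a₁ : ℝ) (hk : 0 < k) (ha₁ : 0 < a₁)
    (ψ : ℝ → ℝ) (ν : ℝ) (hν : 0 < ν)
    (hψ : ContDiff ℝ 2 ψ) (hbound : ∀ s, ν ≤ ψ s)
    (a₀ : ℝ → ℝ) (ha₀ : ∀ s, a₀ s = a₁ * |s| ^ k + ψ s)
    (g₀ : ℝ → ℝ)
    (hg₀ : ∀ s, HasDerivAt g₀ (1 / Real.sqrt (a₀ (g₀ s))) s) (hg₀0 : g₀ 0 = 0)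
    (G₀ : ℝ → ℝ)
    (hG₀ : ∀ s, G₀ s = s - (2 / (k + 2)) * g₀ s * Real.sqrt (a₀ (g₀ s)))
    (hψsmall : Tendsto (fun s : ℝ => ψ s / s ^ k) atTop (𝓝 0))
    (hsign : ∀ s ≥ (0 : ℝ), 0 ≤ k * ψ s - s * deriv ψ s)
    (α : ℝ)
    (hα : k ≤ 2 → 0 < α ∧
      Tendsto (fun s : ℝ => k * ψ s - s * deriv ψ s) atTop (𝓝 α)) :
    MonotoneOn G₀ (Set.Ici 0) ∧
    (∀ s ≥ (0 : ℝ), 0 ≤ G₀ s) ∧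
    (∀ᶠ s in atTop, 0 < G₀ s) ∧
    (2 ≤ k → Tendsto (fun s : ℝ => s * (deriv g₀ s) ^ 2 / G₀ s) atTop (𝓝 0)) ∧
    (k < 2 → Tendsto (fun s : ℝ => s * (deriv g₀ s) ^ 2 / G₀ s) atTop
      (𝓝 ((2 - k) / α))) := by
  have hk2 : (0:ℝ) < k + 2 := by linarith
  have ha₀pos : ∀ t, 0 < a₀ t := by
    intro t
    rw [ha₀]
    have h1 : 0 ≤ a₁ * |t| ^ k := by positivity
    linarith [hbound t]
  have hSpos : ∀ t, 0 < Real.sqrt (a₀ t) := fun t => Real.sqrt_pos.2 (ha₀pos t)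
  have hg₀deriv : ∀ s, deriv g₀ s = 1 / Real.sqrt (a₀ (g₀ s)) := fun s => (hg₀ s).deriv
  have hg₀mono : StrictMono g₀ := by
    apply strictMono_of_deriv_pos
    intro s
    rw [hg₀deriv s]
    exact one_div_pos.2 (hSpos _)
  have hg₀sp : ∀ s > (0:ℝ), 0 < g₀ s := fun s hs => hg₀0 ▸ hg₀mono hs
  have hg₀diff : Differentiable ℝ g₀ := fun s => (hg₀ s).differentiableAt
  have hg₀cont : Continuous g₀ := hg₀diff.continuous
  have hψcont : Continuous ψ := hψ.continuous
  have hψ'cont : Continuous (deriv ψ) := hψ.continuous_deriv (by norm_num)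
  have hψd : ∀ t, HasDerivAt ψ (deriv ψ t) t :=
    fun t => ((hψ.differentiable (by norm_num)) t).hasDerivAt
  have ha₀fun : a₀ = fun t => a₁ * |t| ^ k + ψ t := funext ha₀
  have ha₀cont : Continuous a₀ := by
    rw [ha₀fun]
    exact (continuous_const.mul (continuous_abs.rpow_const (fun x => Or.inr hk.le))).add hψcont
  -- g₀ tends to infinity
  have hgtop : Tendsto g₀ atTop atTop := by
    apply tendsto_atTop_atTop_of_monotone hg₀mono.monotone
    intro b
    by_contra hcon
    push_neg at hcon
    have hb : 0 < b := hg₀0 ▸ hcon 0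
    obtain ⟨M, hM1, hM2⟩ : ∃ M, 0 < M ∧ ∀ t ∈ Icc (0:ℝ) b, a₀ t ≤ M := by
      obtain ⟨x, _, hx⟩ := isCompact_Icc.exists_isMaxOn (Set.nonempty_Icc.2 hb.le)
        (ha₀cont.continuousOn (s := Icc (0:ℝ) b))
      exact ⟨a₀ x, ha₀pos x, fun t ht => hx ht⟩
    have hMs : 0 < Real.sqrt M := Real.sqrt_pos.2 hM1
    have hlin : ∀ s ≥ (0:ℝ), s * (Real.sqrt M)⁻¹ ≤ g₀ s := by
      have hmon : MonotoneOn (fun s => g₀ s - s * (Real.sqrt M)⁻¹) (Ici 0) := by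
        apply monotoneOn_of_deriv_nonneg (convex_Ici 0)
        · exact (hg₀cont.sub (continuous_id.mul continuous_const)).continuousOn
        · exact fun x _ => (hg₀diff x).sub
            ((differentiable_id.mul (differentiable_const _)) x) |>.differentiableWithinAt
        · intro x hx
          rw [interior_Ici] at hx
          have hd : HasDerivAt (fun s => g₀ s - s * (Real.sqrt M)⁻¹)
              (1 / Real.sqrt (a₀ (g₀ x)) - 1 * (Real.sqrt M)⁻¹) x :=
            (hg₀ x).sub ((hasDerivAt_id x).mul_const _)
          rw [hd.deriv]
          have hmem : g₀ x ∈ Icc (0:ℝ) b := ⟨(hg₀sp x hx).le, (hcon x).le⟩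
          have h1 : Real.sqrt (a₀ (g₀ x)) ≤ Real.sqrt M := Real.sqrt_le_sqrt (hM2 _ hmem)
          have h2 : (Real.sqrt M)⁻¹ ≤ (Real.sqrt (a₀ (g₀ x)))⁻¹ :=
            inv_anti₀ (hSpos _) h1
          rw [one_mul, sub_nonneg, one_div]
          exact h2
      intro s hs
      have := hmon (self_mem_Ici) hs hs
      simp only [hg₀0, zero_mul, sub_zero, sub_nonneg] at this
      linarith [this]
    have := hlin (Real.sqrt M * b) (by positivity)
    rw [mul_comm, ← mul_assoc, inv_mul_cancel₀ hMs.ne', one_mul] at this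
    exact absurd this (not_le.2 (hcon _))
  -- derivative of a₀ for t > 0
  have ha₀eq : ∀ t > (0:ℝ), a₀ t = a₁ * t ^ k + ψ t := by
    intro t ht
    rw [ha₀, abs_of_pos ht]
  have ha₀d : ∀ t > (0:ℝ), HasDerivAt a₀ (a₁ * (k * t ^ (k - 1)) + deriv ψ t) t := by
    intro t ht
    have h1 : HasDerivAt (fun u : ℝ => u ^ k) (k * t ^ (k - 1)) t :=
      Real.hasDerivAt_rpow_const (Or.inl ht.ne')
    have h2 : HasDerivAt (fun u : ℝ => a₁ * u ^ k + ψ u)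
        (a₁ * (k * t ^ (k - 1)) + deriv ψ t) t := (h1.const_mul a₁).add (hψd t)
    apply h2.congr_of_eventuallyEq
    filter_upwards [Ioi_mem_nhds ht] with u hu
    rw [ha₀, abs_of_pos hu]
  -- derivative of G₀ for s with g₀ s > 0
  have hG₀d : ∀ s : ℝ, 0 < g₀ s → HasDerivAt G₀
      ((k * ψ (g₀ s) - g₀ s * deriv ψ (g₀ s)) / ((k + 2) * a₀ (g₀ s))) s := by
    intro s hs
    set t := g₀ s with htdef
    have hA : 0 < a₀ t := ha₀pos t
    have hS : 0 < Real.sqrt (a₀ t) := hSpos t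
    have hcomp : HasDerivAt (fun u => a₀ (g₀ u))
        ((a₁ * (k * t ^ (k - 1)) + deriv ψ t) * (1 / Real.sqrt (a₀ t))) s :=
      (ha₀d t hs).comp s (hg₀ s)
    have hsq : HasDerivAt (fun u => Real.sqrt (a₀ (g₀ u)))
        (1 / (2 * Real.sqrt (a₀ t)) *
          ((a₁ * (k * t ^ (k - 1)) + deriv ψ t) * (1 / Real.sqrt (a₀ t)))) s :=
      (Real.hasDerivAt_sqrt hA.ne').comp s hcomp
    have hall : HasDerivAt (fun u => u - 2 / (k + 2) * g₀ u * Real.sqrt (a₀ (g₀ u)))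
        (1 - (2 / (k + 2) * (1 / Real.sqrt (a₀ t)) * Real.sqrt (a₀ t)
          + 2 / (k + 2) * t *
            (1 / (2 * Real.sqrt (a₀ t)) *
              ((a₁ * (k * t ^ (k - 1)) + deriv ψ t) * (1 / Real.sqrt (a₀ t)))))) s :=
      (hasDerivAt_id s).sub ((((hg₀ s).const_mul (2 / (k + 2))).mul hsq))
    have hGfun : G₀ = fun u => u - 2 / (k + 2) * g₀ u * Real.sqrt (a₀ (g₀ u)) := funext hG₀
    rw [hGfun]
    convert hall using 1
    have hS2 : Real.sqrt (a₀ t) * Real.sqrt (a₀ t) = a₀ t := Real.mul_self_sqrt hA.le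
    have htk : t ^ (k - 1) * t = t ^ k := by
      rw [← Real.rpow_add_one hs.ne', sub_add_cancel]
    have hAe : a₀ t = a₁ * t ^ k + ψ t := ha₀eq t hs
    have e1 : 2 / (k + 2) * (1 / Real.sqrt (a₀ t)) * Real.sqrt (a₀ t) = 2 / (k + 2) := by
      field_simp
    have e2 : 1 / (2 * Real.sqrt (a₀ t)) *
        ((a₁ * (k * t ^ (k - 1)) + deriv ψ t) * (1 / Real.sqrt (a₀ t)))
        = (a₁ * (k * t ^ (k - 1)) + deriv ψ t)
          / (2 * (Real.sqrt (a₀ t) * Real.sqrt (a₀ t))) := by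
      ring
    have htk' : t ^ (k - 1) = t ^ k / t := (eq_div_iff hs.ne').2 htk
    have hP : 0 < a₁ * t ^ k + ψ t := by
      have : (0:ℝ) < t ^ k := Real.rpow_pos_of_pos hs k
      nlinarith [hbound t]
    rw [e1, e2, hS2, hAe, htk']
    field_simp
    ring
  have hG₀cont : Continuous G₀ := by
    have : G₀ = fun u => u - 2 / (k + 2) * g₀ u * Real.sqrt (a₀ (g₀ u)) := funext hG₀
    rw [this]
    exact continuous_id.sub ((continuous_const.mul hg₀cont).mul
      ((ha₀cont.comp hg₀cont).sqrt))
  have hG₀0 : G₀ 0 = 0 := by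
    rw [hG₀ 0, hg₀0]
    ring
  -- Part 1: monotone
  have hmono : MonotoneOn G₀ (Set.Ici 0) := by
    apply monotoneOn_of_deriv_nonneg (convex_Ici 0) hG₀cont.continuousOn
    · intro x hx
      rw [interior_Ici] at hx
      exact (hG₀d x (hg₀sp x hx)).differentiableAt.differentiableWithinAt
    · intro x hx
      rw [interior_Ici] at hx
      rw [(hG₀d x (hg₀sp x hx)).deriv]
      exact div_nonneg (hsign _ (hg₀sp x hx).le) (mul_pos hk2 (ha₀pos _)).le
  -- Part 2: nonneg
  have hnonneg : ∀ s ≥ (0:ℝ), 0 ≤ G₀ s := by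
    intro s hs
    have := hmono self_mem_Ici hs hs
    rwa [hG₀0] at this
  -- Part 3: eventually positive
  have hφcont : Continuous (fun t => k * ψ t - t * deriv ψ t) :=
    (continuous_const.mul hψcont).sub (continuous_id.mul hψ'cont)
  have hφ0 : 0 < k * ψ 0 - 0 * deriv ψ 0 := by
    have := hbound 0
    nlinarith
  obtain ⟨δ, hδpos, hδ⟩ : ∃ δ > 0, ∀ t, |t - 0| < δ → 0 < k * ψ t - t * deriv ψ t := by
    have h := hφcont.continuousAt (x := 0)
    have h2 := h.eventually_mem (IsOpen.mem_nhds isOpen_Ioi hφ0)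
    rw [Metric.eventually_nhds_iff] at h2
    obtain ⟨δ, hδpos, hδ⟩ := h2
    exact ⟨δ, hδpos, fun t ht => hδ (by simpa [Real.dist_eq] using ht)⟩
  obtain ⟨s₁, hs₁pos, hs₁δ⟩ : ∃ s₁ > 0, g₀ s₁ < δ := by
    have h := hg₀cont.continuousAt (x := 0)
    rw [Metric.continuousAt_iff] at h
    obtain ⟨ε', hε'pos, hε'⟩ := h δ hδpos
    refine ⟨ε' / 2, by linarith, ?_⟩
    have := hε' (x := ε' / 2) (by rw [Real.dist_eq]; rw [abs_of_pos (by linarith)]; linarith)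
    rw [Real.dist_eq, hg₀0, sub_zero] at this
    calc g₀ (ε' / 2) ≤ |g₀ (ε' / 2)| := le_abs_self _
      _ < δ := this
  have hG₀s₁ : 0 < G₀ s₁ := by
    have hsm : StrictMonoOn G₀ (Icc 0 s₁) := by
      apply strictMonoOn_of_deriv_pos (convex_Icc 0 s₁) (hG₀cont.continuousOn)
      intro x hx
      rw [interior_Icc] at hx
      have hgx : 0 < g₀ x := hg₀sp x hx.1
      rw [(hG₀d x hgx).deriv]
      apply div_pos ?_ (mul_pos hk2 (ha₀pos _))
      apply hδ
      rw [sub_zero, abs_of_pos hgx]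
      calc g₀ x < g₀ s₁ := hg₀mono hx.2
        _ < δ := hs₁δ
    have := hsm (left_mem_Icc.2 hs₁pos.le) (right_mem_Icc.2 hs₁pos.le) hs₁pos
    rwa [hG₀0] at this
  have heventually : ∀ᶠ s in atTop, 0 < G₀ s := by
    filter_upwards [eventually_ge_atTop s₁] with s hs
    exact lt_of_lt_of_le hG₀s₁ (hmono (mem_Ici.2 hs₁pos.le) (mem_Ici.2 (hs₁pos.le.trans hs)) hs)
  -- asymptotics of a₀
  have hAq : Tendsto (fun t => a₀ t / t ^ k) atTop (𝓝 a₁) := by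
    have h : Tendsto (fun t : ℝ => a₁ + ψ t / t ^ k) atTop (𝓝 (a₁ + 0)) :=
      tendsto_const_nhds.add hψsmall
    rw [add_zero] at h
    apply h.congr'
    filter_upwards [eventually_gt_atTop (0:ℝ)] with t ht
    have htk : (0:ℝ) < t ^ k := Real.rpow_pos_of_pos ht k
    rw [ha₀eq t ht, add_div, mul_div_assoc, div_self htk.ne', mul_one]
  have hsqrtk : ∀ t : ℝ, 0 < t → Real.sqrt (t ^ k) = t ^ (k / 2) := by
    intro t ht
    rw [Real.sqrt_eq_rpow, ← Real.rpow_mul ht.le, show k * (1/2) = k / 2 by ring]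
  have hsqA : Tendsto (fun t => Real.sqrt (a₀ t) / t ^ (k / 2)) atTop (𝓝 (Real.sqrt a₁)) := by
    have h := (Real.continuous_sqrt.tendsto a₁).comp hAq
    apply h.congr'
    filter_upwards [eventually_gt_atTop (0:ℝ)] with t ht
    show Real.sqrt (a₀ t / t ^ k) = _
    rw [Real.sqrt_div (ha₀pos t).le, hsqrtk t ht]
  have hgs : ∀ᶠ s in atTop, 0 < g₀ s := hgtop.eventually_gt_atTop 0
  have hq : (0:ℝ) < (k + 2) / 2 := by linarith
  -- main L'Hopital limit: s / (g₀ s)^((k+2)/2)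
  have hL1 : Tendsto (fun s => s / g₀ s ^ ((k + 2) / 2)) atTop
      (𝓝 (Real.sqrt a₁ / ((k + 2) / 2))) := by
    apply lhopital_atTop_inf _ _ (fun _ => (1:ℝ))
      (fun s => (k + 2) / 2 * g₀ s ^ ((k + 2) / 2 - 1) * (1 / Real.sqrt (a₀ (g₀ s))))
    · exact Eventually.of_forall (fun x => hasDerivAt_id x)
    · filter_upwards [hgs] with s hs
      have h := (hg₀ s).rpow_const (p := (k + 2) / 2) (Or.inl hs.ne')
      convert h using 1
      ring
    · filter_upwards [hgs] with s hs
      exact mul_pos (mul_pos hq (Real.rpow_pos_of_pos hs _)) (one_div_pos.2 (hSpos _))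
    · exact (tendsto_rpow_atTop hq).comp hgtop
    · have hbase := (hsqA.comp hgtop).div_const ((k + 2) / 2)
      apply hbase.congr'
      filter_upwards [hgs] with s hs
      show Real.sqrt (a₀ (g₀ s)) / g₀ s ^ (k / 2) / ((k + 2) / 2) = _
      rw [show (k + 2) / 2 - 1 = k / 2 by ring]
      have h1 : (0:ℝ) < g₀ s ^ (k / 2) := Real.rpow_pos_of_pos hs _
      field_simp
  -- t^k / a₀ t composed limit
  have hB : Tendsto (fun s => g₀ s ^ k / a₀ (g₀ s)) atTop (𝓝 a₁⁻¹) := by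
    have h := (hAq.comp hgtop).inv₀ ha₁.ne'
    apply h.congr
    intro s
    show (a₀ (g₀ s) / g₀ s ^ k)⁻¹ = _
    rw [inv_div]
  have hsqa₁ : (0:ℝ) < Real.sqrt a₁ := Real.sqrt_pos.2 ha₁
  have hinv : Tendsto (fun s => g₀ s ^ (k / 2) / Real.sqrt (a₀ (g₀ s))) atTop
      (𝓝 (Real.sqrt a₁)⁻¹) := by
    have h := (hsqA.comp hgtop).inv₀ hsqa₁.ne'
    apply h.congr
    intro s
    show (Real.sqrt (a₀ (g₀ s)) / g₀ s ^ (k / 2))⁻¹ = _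
    rw [inv_div]
  -- rewrite the target function
  have hE : ∀ s, s * (deriv g₀ s) ^ 2 / G₀ s = s / a₀ (g₀ s) / G₀ s := by
    intro s
    rw [hg₀deriv s, div_pow, one_pow, Real.sq_sqrt (ha₀pos _).le]
    ring
  refine ⟨hmono, hnonneg, heventually, ?_, ?_⟩
  · -- case 2 ≤ k
    intro hge2
    rcases eq_or_lt_of_le hge2 with heq | hgt
    · -- k = 2
      obtain ⟨hαpos, hαlim⟩ := hα heq.ge
      subst heq
      have hL₃pos : (0:ℝ) < α * (Real.sqrt a₁)⁻¹ / (2 + 2) := by positivity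
      have hlogtop : Tendsto (fun s => Real.log (g₀ s)) atTop atTop :=
        Real.tendsto_log_atTop.comp hgtop
      have hinv' : Tendsto (fun s => g₀ s / Real.sqrt (a₀ (g₀ s))) atTop
          (𝓝 (Real.sqrt a₁)⁻¹) := by
        apply hinv.congr
        intro s
        rw [show (2:ℝ)/2 = 1 by norm_num, Real.rpow_one]
      have hratioG : Tendsto (fun s => G₀ s / Real.log (g₀ s)) atTop
          (𝓝 (α * (Real.sqrt a₁)⁻¹ / (2 + 2))) := by
        apply lhopital_atTop_inf _ _
          (fun s => (2 * ψ (g₀ s) - g₀ s * deriv ψ (g₀ s)) / ((2 + 2) * a₀ (g₀ s)))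
          (fun s => 1 / Real.sqrt (a₀ (g₀ s)) / g₀ s)
        · filter_upwards [hgs] with s hs
          exact hG₀d s hs
        · filter_upwards [hgs] with s hs
          exact (hg₀ s).log hs.ne'
        · filter_upwards [hgs] with s hs
          exact div_pos (one_div_pos.2 (hSpos _)) hs
        · exact hlogtop
        · have hbase := ((hαlim.comp hgtop).mul hinv').div_const ((2:ℝ) + 2)
          apply hbase.congr'
          filter_upwards [hgs] with s hs
          simp only [Function.comp_apply]
          have hA := ha₀pos (g₀ s)
          set S := Real.sqrt (a₀ (g₀ s)) with hSdef
          have hS : 0 < S := hSpos (g₀ s)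
          have hS2 : S * S = a₀ (g₀ s) := Real.mul_self_sqrt hA.le
          rw [← hS2]
          field_simp
      have hGtop : Tendsto G₀ atTop atTop := by
        apply tendsto_atTop_mono' atTop ?_ (hlogtop.const_mul_atTop (half_pos hL₃pos))
        filter_upwards [hratioG.eventually (eventually_gt_nhds (half_lt_self hL₃pos)),
          hlogtop.eventually_gt_atTop 0] with s h1 h2
        exact ((lt_div_iff₀ h2).1 h1).le
      have hGinv : Tendsto (fun s => (G₀ s)⁻¹) atTop (𝓝 0) := hGtop.inv_tendsto_atTop
      have hfinal := (hL1.mul hB).mul hGinv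
      rw [mul_zero] at hfinal
      apply hfinal.congr'
      filter_upwards [hgs] with s hs
      show s / g₀ s ^ ((2 + 2) / 2 : ℝ) * (g₀ s ^ (2:ℝ) / a₀ (g₀ s)) * (G₀ s)⁻¹ = _
      rw [hE s, show ((2:ℝ) + 2) / 2 = (2:ℝ) by norm_num]
      have hT : (0:ℝ) < g₀ s ^ (2:ℝ) := Real.rpow_pos_of_pos hs _
      have hA := ha₀pos (g₀ s)
      rw [div_div]
      field_simp
    · -- k > 2
      have hsA : Tendsto (fun s => s / a₀ (g₀ s)) atTop (𝓝 0) := by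
        have h3 : Tendsto (fun x : ℝ => x ^ ((2 - k) / 2)) atTop (𝓝 0) := by
          have h := tendsto_rpow_neg_atTop (y := (k - 2) / 2) (by linarith)
          rw [show (2 - k) / 2 = -((k - 2) / 2) by ring]
          exact h
        have h := (hL1.mul hB).mul (h3.comp hgtop)
        rw [mul_zero] at h
        apply h.congr'
        filter_upwards [hgs] with s hs
        show s / g₀ s ^ ((k + 2) / 2) * (g₀ s ^ k / a₀ (g₀ s)) * g₀ s ^ ((2 - k) / 2) = _
        have h1 : g₀ s ^ k * g₀ s ^ ((2 - k) / 2) = g₀ s ^ ((k + 2) / 2) := by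
          rw [← Real.rpow_add hs, show k + (2 - k) / 2 = (k + 2) / 2 by ring]
        have hT : (0:ℝ) < g₀ s ^ ((k + 2) / 2) := Real.rpow_pos_of_pos hs _
        calc s / g₀ s ^ ((k + 2) / 2) * (g₀ s ^ k / a₀ (g₀ s)) * g₀ s ^ ((2 - k) / 2)
            = s * (g₀ s ^ k * g₀ s ^ ((2 - k) / 2)) / (g₀ s ^ ((k + 2) / 2) * a₀ (g₀ s)) := by
              ring
          _ = s * g₀ s ^ ((k + 2) / 2) / (g₀ s ^ ((k + 2) / 2) * a₀ (g₀ s)) := by rw [h1]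
          _ = s / a₀ (g₀ s) := by
              rw [mul_comm s _, mul_div_mul_left _ _ hT.ne']
      apply squeeze_zero' (g := fun s => s / a₀ (g₀ s) / G₀ s₁)
      · filter_upwards [eventually_ge_atTop (0:ℝ)] with s hs
        rw [hE s]
        exact div_nonneg (div_nonneg hs (ha₀pos _).le) (hnonneg s hs)
      · filter_upwards [eventually_ge_atTop s₁, eventually_ge_atTop (0:ℝ)] with s hs hs0
        rw [hE s]
        have hle : G₀ s₁ ≤ G₀ s := hmono (mem_Ici.2 hs₁pos.le) (mem_Ici.2 hs0) hs
        exact div_le_div_of_nonneg_left (div_nonneg hs0 (ha₀pos _).le) hG₀s₁ hle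
      · simpa using hsA.div_const (G₀ s₁)
  · -- case k < 2
    intro hlt
    obtain ⟨hαpos, hαlim⟩ := hα hlt.le
    have hr : (0:ℝ) < (2 - k) / 2 := by linarith
    have hL2 : Tendsto (fun s => G₀ s / g₀ s ^ ((2 - k) / 2)) atTop
        (𝓝 (α * (Real.sqrt a₁)⁻¹ / ((k + 2) * ((2 - k) / 2)))) := by
      apply lhopital_atTop_inf _ _
        (fun s => (k * ψ (g₀ s) - g₀ s * deriv ψ (g₀ s)) / ((k + 2) * a₀ (g₀ s)))
        (fun s => (2 - k) / 2 * g₀ s ^ ((2 - k) / 2 - 1) * (1 / Real.sqrt (a₀ (g₀ s))))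
      · filter_upwards [hgs] with s hs
        exact hG₀d s hs
      · filter_upwards [hgs] with s hs
        have h := (hg₀ s).rpow_const (p := (2 - k) / 2) (Or.inl hs.ne')
        convert h using 1
        ring
      · filter_upwards [hgs] with s hs
        exact mul_pos (mul_pos hr (Real.rpow_pos_of_pos hs _)) (one_div_pos.2 (hSpos _))
      · exact (tendsto_rpow_atTop hr).comp hgtop
      · have hbase := ((hαlim.comp hgtop).mul hinv).div_const ((k + 2) * ((2 - k) / 2))
        apply hbase.congr'
        filter_upwards [hgs] with s hs
        simp only [Function.comp_apply]
        have he : g₀ s ^ ((2 - k) / 2 - 1) = (g₀ s ^ (k / 2))⁻¹ := by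
          rw [show (2 - k) / 2 - 1 = -(k / 2) by ring, Real.rpow_neg hs.le]
        rw [he]
        have h1 : (0:ℝ) < g₀ s ^ (k / 2) := Real.rpow_pos_of_pos hs _
        exact aux_ratio _ _ _ _ _ _ (Real.mul_self_sqrt (ha₀pos (g₀ s)).le)
          (hSpos _).ne' h1.ne' hr.ne' hk2.ne'
    have hL₁vpos : (0:ℝ) < α * (Real.sqrt a₁)⁻¹ / ((k + 2) * ((2 - k) / 2)) := by
      apply div_pos (mul_pos hαpos (inv_pos.2 hsqa₁))
      exact mul_pos hk2 hr
    have hL2inv : Tendsto (fun s => g₀ s ^ ((2 - k) / 2) / G₀ s) atTop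
        (𝓝 (α * (Real.sqrt a₁)⁻¹ / ((k + 2) * ((2 - k) / 2)))⁻¹) := by
      have h := hL2.inv₀ hL₁vpos.ne'
      apply h.congr
      intro s
      exact inv_div _ _
    have hfinal := (hL1.mul hB).mul hL2inv
    have hval : Real.sqrt a₁ / ((k + 2) / 2) * a₁⁻¹ *
        (α * (Real.sqrt a₁)⁻¹ / ((k + 2) * ((2 - k) / 2)))⁻¹ = (2 - k) / α := by
      have hss : Real.sqrt a₁ * Real.sqrt a₁ = a₁ := Real.mul_self_sqrt ha₁.le
      have h2 : (α * (Real.sqrt a₁)⁻¹ / ((k + 2) * ((2 - k) / 2)))⁻¹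
          = (k + 2) * ((2 - k) / 2) / α * Real.sqrt a₁ := by
        rw [inv_div, div_mul_eq_div_div, div_inv_eq_mul]
      rw [h2]
      have h3 : (k + 2) * ((2 - k) / 2) / ((k + 2) / 2) = 2 - k := by
        rw [div_eq_iff (by positivity : ((k:ℝ) + 2) / 2 ≠ 0)]
        ring
      calc Real.sqrt a₁ / ((k + 2) / 2) * a₁⁻¹ * ((k + 2) * ((2 - k) / 2) / α * Real.sqrt a₁)
          = Real.sqrt a₁ * Real.sqrt a₁ * a₁⁻¹ *
              ((k + 2) * ((2 - k) / 2) / ((k + 2) / 2)) / α := by ring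
        _ = (2 - k) / α := by
            rw [hss, h3, mul_inv_cancel₀ ha₁.ne', one_mul]
    rw [hval] at hfinal
    apply hfinal.congr'
    filter_upwards [hgs, heventually] with s hs hG
    have h1 : g₀ s ^ k * g₀ s ^ ((2 - k) / 2) = g₀ s ^ ((k + 2) / 2) := by
      rw [← Real.rpow_add hs, show k + (2 - k) / 2 = (k + 2) / 2 by ring]
    have hT : (0:ℝ) < g₀ s ^ ((k + 2) / 2) := Real.rpow_pos_of_pos hs _
    show s / g₀ s ^ ((k + 2) / 2) * (g₀ s ^ k / a₀ (g₀ s)) * (g₀ s ^ ((2 - k) / 2) / G₀ s)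
        = _
    rw [hE s]
    calc s / g₀ s ^ ((k + 2) / 2) * (g₀ s ^ k / a₀ (g₀ s)) * (g₀ s ^ ((2 - k) / 2) / G₀ s)
        = s * (g₀ s ^ k * g₀ s ^ ((2 - k) / 2)) /
            (g₀ s ^ ((k + 2) / 2) * (a₀ (g₀ s) * G₀ s)) := by ring
      _ = s * g₀ s ^ ((k + 2) / 2) / (g₀ s ^ ((k + 2) / 2) * (a₀ (g₀ s) * G₀ s)) := by
          rw [h1]
      _ = s / (a₀ (g₀ s) * G₀ s) := by
          rw [mul_comm s _, mul_div_mul_left _ _ hT.ne']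
      _ = s / a₀ (g₀ s) / G₀ s := (div_div _ _ _).symm
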